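/- arXiv:2604.24505 — 2 statements merged into one kernel-verified Lean document; each statement's English description precedes it below -/
import Mathlib

section
/- Let f : [0,1] → ℝ be bounded with finite p-variation V_p(f) for some p ≥ 1. Then for every x > 0, |∫₀¹ f(t) e^{-2πi x t} dt| ≤ V_p(f) · x^{-1/p} + ‖f‖_∞ / x. -/
open Set MeasureTheory Filter

noncomputable section

/-- The set of values `(∑ |f(x_k)-f(x_{k-1})|^p)^{1/p}` over all partitions
`0 = x_0 < x_1 < ⋯ < x_n = 1` of `[0,1]`. -/
def pVarSums {E : Type*} [NormedAddCommGroup E] (p : ℝ) (f : ℝ → E) : Set ℝ :=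
  {S | ∃ n : ℕ, ∃ x : ℕ → ℝ, x 0 = 0 ∧ x n = 1 ∧ (∀ i, i < n → x i < x (i + 1)) ∧
    S = (∑ k ∈ Finset.range n, ‖f (x (k + 1)) - f (x k)‖ ^ p) ^ (1 / p)}

/-- The `p`-variation of `f` on `[0,1]`. -/
def pVar {E : Type*} [NormedAddCommGroup E] (p : ℝ) (f : ℝ → E) : ℝ :=
  sSup (pVarSums p f)

/-- `f` has finite `p`-variation on `[0,1]`. -/
def HasFinitePVar {E : Type*} [NormedAddCommGroup E] (p : ℝ) (f : ℝ → E) : Prop :=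
  BddAbove (pVarSums p f)

/-- The sup norm of `f` on `[0,1]`. -/
def supNorm01 {E : Type*} [NormedAddCommGroup E] (f : ℝ → E) : ℝ :=
  sSup ((fun t => ‖f t‖) '' Icc (0 : ℝ) 1)

lemma pVar_nonneg {p : ℝ} {f : ℝ → ℝ} (hfv : HasFinitePVar p f) : 0 ≤ pVar p f := by
  have hmem : ((∑ k ∈ Finset.range 1, ‖f ((fun i : ℕ => (i : ℝ)) (k + 1)) -
      f ((fun i : ℕ => (i : ℝ)) k)‖ ^ p) ^ (1 / p)) ∈ pVarSums p f :=
    ⟨1, fun i => (i : ℝ), by norm_num, by norm_num,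
      by intro i hi; interval_cases i <;> norm_num, rfl⟩
  refine le_trans ?_ (le_csSup hfv hmem)
  positivity

lemma supNorm01_nonneg {f : ℝ → ℝ}
    (hbdd : BddAbove ((fun t => ‖f t‖) '' Icc (0 : ℝ) 1)) : 0 ≤ supNorm01 f := by
  refine le_trans (norm_nonneg (f 0)) (le_csSup hbdd ⟨0, by norm_num, rfl⟩)

lemma le_supNorm01 {f : ℝ → ℝ} (hbdd : BddAbove ((fun t => ‖f t‖) '' Icc (0 : ℝ) 1))
    {t : ℝ} (ht : t ∈ Icc (0 : ℝ) 1) : |f t| ≤ supNorm01 f :=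
  le_csSup hbdd ⟨t, ht, rfl⟩

lemma sum_csSup_le {A : ℕ → Set ℝ} : ∀ {N : ℕ} {C : ℝ}, (∀ k, k < N → (A k).Nonempty) →
    (∀ g : ℕ → ℝ, (∀ k, k < N → g k ∈ A k) → ∑ k ∈ Finset.range N, g k ≤ C) →
    ∑ k ∈ Finset.range N, sSup (A k) ≤ C := by
  intro N
  induction N with
  | zero => intro C _ H; simpa using H (fun _ => 0) (by omega)
  | succ n ih =>
    intro C hne H
    rw [Finset.sum_range_succ]
    have h1 : sSup (A n) ≤ C - ∑ k ∈ Finset.range n, sSup (A k) := by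
      apply csSup_le (hne n (by omega))
      intro a ha
      rw [le_sub_comm]
      refine ih (fun k hk => hne k (by omega)) ?_
      intro g hg
      have := H (Function.update g n a) ?_
      · rw [Finset.sum_range_succ, Function.update_self] at this
        have heq : ∑ k ∈ Finset.range n, Function.update g n a k
            = ∑ k ∈ Finset.range n, g k := by
          refine Finset.sum_congr rfl fun k hk => ?_
          exact Function.update_of_ne (by simp at hk; omega) _ _
        linarith [heq ▸ this]
      · intro k hk
        rcases Nat.lt_or_ge k n with h | h
        · rw [Function.update_of_ne (by omega)]; exact hg k h
        · have : k = n := by omega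
          subst this; rw [Function.update_self]; exact ha
    linarith

lemma weak_chain_sum_le {p : ℝ} {f : ℝ → ℝ} (hp : 1 ≤ p) (hfv : HasFinitePVar p f) :
    ∀ m : ℕ, ∀ z : ℕ → ℝ, z 0 = 0 → z m = 1 → (∀ i, i < m → z i ≤ z (i + 1)) →
    ∑ j ∈ Finset.range m, ‖f (z (j + 1)) - f (z j)‖ ^ p ≤ pVar p f ^ p := by
  have hp0 : p ≠ 0 := by positivity
  intro m
  induction m with
  | zero => intro z h0 h1 _; rw [h0] at h1; norm_num at h1
  | succ m ih =>
    intro z h0 h1 hmono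
    by_cases hstrict : ∀ i, i < m + 1 → z i < z (i + 1)
    · have hmem : ((∑ j ∈ Finset.range (m + 1), ‖f (z (j + 1)) - f (z j)‖ ^ p) ^ (1 / p))
          ∈ pVarSums p f := ⟨m + 1, z, h0, h1, hstrict, rfl⟩
      have hS := le_csSup hfv hmem
      have hsum0 : 0 ≤ ∑ j ∈ Finset.range (m + 1), ‖f (z (j + 1)) - f (z j)‖ ^ p := by
        refine Finset.sum_nonneg fun j _ => ?_
        positivity
      calc ∑ j ∈ Finset.range (m + 1), ‖f (z (j + 1)) - f (z j)‖ ^ p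
          = ((∑ j ∈ Finset.range (m + 1), ‖f (z (j + 1)) - f (z j)‖ ^ p) ^ (1 / p)) ^ p := by
            rw [one_div, Real.rpow_inv_rpow hsum0 hp0]
        _ ≤ pVar p f ^ p := Real.rpow_le_rpow (by positivity) hS (by linarith)
    · push_neg at hstrict
      obtain ⟨i, hi, hzi⟩ := hstrict
      have hzeq : z i = z (i + 1) := le_antisymm (hmono i hi) hzi
      set z' : ℕ → ℝ := fun j => if j ≤ i then z j else z (j + 1) with hz'
      have h0' : z' 0 = 0 := by simp [hz', h0]
      have h1' : z' m = 1 := by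
        by_cases hmi : m ≤ i
        · have him : i = m := by omega
          simp only [hz', if_pos hmi]
          rw [← h1, ← him, hzeq, him]
        · simp [hz', hmi, h1]
      have hmono' : ∀ j, j < m → z' j ≤ z' (j + 1) := by
        intro j hj
        rcases Nat.lt_or_ge j i with h | h
        · simp only [hz', if_pos h.le, if_pos (Nat.succ_le_of_lt h)]
          exact hmono j (by omega)
        rcases Nat.eq_or_lt_of_le h with h' | h'
        · subst h'
          simp only [hz', if_pos le_rfl, if_neg (by omega : ¬ i + 1 ≤ i)]
          rw [hzeq]
          exact hmono (i + 1) (by omega)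
        · simp only [hz', if_neg (by omega : ¬ j ≤ i), if_neg (by omega : ¬ j + 1 ≤ i)]
          exact hmono (j + 1) (by omega)
      have key := ih z' h0' h1' hmono'
      have hzval : ∀ j, i ≤ j → z' j = z (j + 1) := by
        intro j hj
        rcases Nat.eq_or_lt_of_le hj with h' | h'
        · subst h'; simp only [hz', if_pos le_rfl]; exact hzeq
        · simp only [hz', if_neg (by omega : ¬ j ≤ i)]
      have hsum : ∑ j ∈ Finset.range m, ‖f (z' (j + 1)) - f (z' j)‖ ^ p
          = ∑ j ∈ Finset.range (m + 1), ‖f (z (j + 1)) - f (z j)‖ ^ p := by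
        have hGi : ‖f (z (i + 1)) - f (z i)‖ ^ p = 0 := by
          rw [hzeq, sub_self, norm_zero, Real.zero_rpow hp0]
        rw [Finset.range_eq_Ico, Finset.range_eq_Ico,
          ← Finset.sum_Ico_consecutive _ (Nat.zero_le i) (by omega : i ≤ m),
          ← Finset.sum_Ico_consecutive _ (Nat.zero_le i) (by omega : i ≤ m + 1),
          Finset.sum_eq_sum_Ico_succ_bot (by omega : i < m + 1)]
        have e1 : ∑ j ∈ Finset.Ico 0 i, ‖f (z' (j + 1)) - f (z' j)‖ ^ p
            = ∑ j ∈ Finset.Ico 0 i, ‖f (z (j + 1)) - f (z j)‖ ^ p := by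
          refine Finset.sum_congr rfl fun j hj => ?_
          simp only [Finset.mem_Ico] at hj
          simp only [hz', if_pos (by omega : j ≤ i), if_pos (by omega : j + 1 ≤ i)]
        have e2 : ∑ j ∈ Finset.Ico i m, ‖f (z' (j + 1)) - f (z' j)‖ ^ p
            = ∑ j ∈ Finset.Ico (i + 1) (m + 1), ‖f (z (j + 1)) - f (z j)‖ ^ p := by
          rw [Finset.sum_Ico_eq_sum_range, Finset.sum_Ico_eq_sum_range]
          simp only [Nat.add_sub_cancel, (by omega : m + 1 - (i + 1) = m - i)]
          refine Finset.sum_congr rfl fun j hj => ?_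
          simp only [Finset.mem_range] at hj
          rw [hzval (i + j) (by omega), hzval (i + j + 1) (by omega),
            (by omega : i + j + 1 + 1 = i + 1 + j + 1), (by omega : i + j + 1 = i + 1 + j)]
        rw [e1, e2, hGi]
        ring
      rw [← hsum]
      exact key

/-- Effective Riemann–Lebesgue lemma: if `f : [0,1] → ℝ` is bounded with finite
`p`-variation, then `|∫₀¹ f(t) e^{-2πixt} dt| ≤ V_p(f) x^{-1/p} + ‖f‖_∞ / x` for `x > 0`. -/
theorem effective_riemann_lebesgue (p : ℝ) (hp : 1 ≤ p) (f : ℝ → ℝ)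
    (hfv : HasFinitePVar p f)
    (hbdd : BddAbove ((fun t => ‖f t‖) '' Icc (0 : ℝ) 1))
    (x : ℝ) (hx : 0 < x) :
    ‖∫ t in (0:ℝ)..1, (f t : ℂ) *
        Complex.exp (-2 * (Real.pi : ℂ) * Complex.I * (x : ℂ) * (t : ℂ))‖ ≤
      pVar p f * x ^ (-(1 / p)) + supNorm01 f / x := by
  have hppos : 0 < p := lt_of_lt_of_le one_pos hp
  have hp0 : p ≠ 0 := hppos.ne'
  have hV0 : 0 ≤ pVar p f := pVar_nonneg hfv
  have hM0 : 0 ≤ supNorm01 f := supNorm01_nonneg hbdd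
  have hRHS : 0 ≤ pVar p f * x ^ (-(1 / p)) + supNorm01 f / x := by positivity
  set F : ℝ → ℂ :=
    fun t => (f t : ℂ) * Complex.exp (-2 * (Real.pi : ℂ) * Complex.I * (x : ℂ) * (t : ℂ))
    with hFdef
  have hnormF : ∀ t : ℝ, ‖F t‖ = |f t| := by
    intro t
    have hrw : (-2 * (Real.pi : ℂ) * Complex.I * (x : ℂ) * (t : ℂ))
        = ((-2 * Real.pi * x * t : ℝ) : ℂ) * Complex.I := by push_cast; ring
    have hFt : F t = (f t : ℂ) * Complex.exp (((-2 * Real.pi * x * t : ℝ) : ℂ) * Complex.I) := by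
      simp only [hFdef]; rw [hrw]
    rw [hFt, norm_mul, Complex.norm_exp_ofReal_mul_I, Complex.norm_real, Real.norm_eq_abs, mul_one]
  by_cases hint : IntervalIntegrable F MeasureTheory.volume 0 1
  swap
  · rw [intervalIntegral.integral_undef hint]
    simpa using hRHS
  rcases le_or_gt x 1 with hx1 | hx1
  · -- trivial case x ≤ 1
    have h1 : ‖∫ t in (0:ℝ)..1, F t‖ ≤ supNorm01 f * |1 - 0| := by
      apply intervalIntegral.norm_integral_le_of_norm_le_const
      intro t ht
      rw [Set.uIoc_of_le (zero_le_one)] at ht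
      rw [hnormF t]
      exact le_supNorm01 hbdd ⟨ht.1.le, ht.2⟩
    have h2 : supNorm01 f ≤ supNorm01 f / x := by
      rw [le_div_iff₀ hx]
      nlinarith
    have h3 : (0:ℝ) ≤ pVar p f * x ^ (-(1 / p)) := by positivity
    simp only [sub_zero, abs_one, mul_one] at h1
    linarith
  · -- main case 1 < x
    set N : ℕ := ⌊x⌋₊ with hNdef
    have hN1 : 1 ≤ N := Nat.floor_pos.mpr hx1.le
    have hNx : (N : ℝ) ≤ x := Nat.floor_le hx.le
    have hxN : x < N + 1 := Nat.lt_floor_add_one x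
    set a : ℕ → ℝ := fun k => k / x with hadef
    have ha0 : a 0 = 0 := by simp [hadef]
    have haN : a N ≤ 1 := by rw [hadef]; exact (div_le_one hx).2 hNx
    have hamono : ∀ k : ℕ, a k < a (k + 1) := by
      intro k
      simp only [hadef]
      rw [div_lt_div_iff₀ hx hx]
      push_cast
      nlinarith [hx]
    have hak_mem : ∀ k, k ≤ N → a k ∈ Icc (0:ℝ) 1 := by
      intro k hk
      constructor
      · simp only [hadef]; positivity
      · simp only [hadef]
        rw [div_le_one hx]
        calc (k : ℝ) ≤ N := by exact_mod_cast hk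
          _ ≤ x := hNx
    have hsub : ∀ u v : ℝ, u ∈ Icc (0:ℝ) 1 → v ∈ Icc (0:ℝ) 1 →
        IntervalIntegrable F MeasureTheory.volume u v := by
      intro u v hu hv
      apply hint.mono_set
      apply Set.uIcc_subset_uIcc <;> rw [Set.uIcc_of_le zero_le_one]
      exacts [hu, hv]
    have hsplit : ∫ t in (0:ℝ)..1, F t
        = (∑ k ∈ Finset.range N, ∫ t in (a k)..(a (k + 1)), F t) + ∫ t in (a N)..1, F t := by
      rw [intervalIntegral.sum_integral_adjacent_intervals
        (fun k hk => hsub _ _ (hak_mem k (by omega)) (hak_mem (k + 1) (by omega))), ha0]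
      exact (intervalIntegral.integral_add_adjacent_intervals
        (hsub 0 (a N) (by norm_num) (hak_mem N le_rfl))
        (hsub (a N) 1 (hak_mem N le_rfl) (by norm_num))).symm
    set d : ℕ → ℝ :=
      fun k => sSup ((fun t => |f t - f (a k)| ^ p) '' Icc (a k) (a (k + 1))) with hddef
    have hne : ∀ k, ((fun t => |f t - f (a k)| ^ p) '' Icc (a k) (a (k + 1))).Nonempty :=
      fun k => ⟨_, ⟨a k, ⟨le_rfl, (hamono k).le⟩, rfl⟩⟩
    have hbddk : ∀ k, k < N →
        BddAbove ((fun t => |f t - f (a k)| ^ p) '' Icc (a k) (a (k + 1))) := by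
      intro k hk
      refine ⟨(supNorm01 f + supNorm01 f) ^ p, ?_⟩
      rintro y ⟨t, ht, rfl⟩
      have htI : t ∈ Icc (0:ℝ) 1 :=
        ⟨le_trans (hak_mem k (by omega)).1 ht.1, le_trans ht.2 (hak_mem (k+1) (by omega)).2⟩
      refine Real.rpow_le_rpow (abs_nonneg _) ?_ hppos.le
      calc |f t - f (a k)| ≤ |f t| + |f (a k)| := abs_sub _ _
        _ ≤ supNorm01 f + supNorm01 f :=
          add_le_add (le_supNorm01 hbdd htI) (le_supNorm01 hbdd (hak_mem k (by omega)))
    have hd0 : ∀ k, k < N → 0 ≤ d k := by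
      intro k hk
      have : |f (a k) - f (a k)| ^ p = 0 := by rw [sub_self, abs_zero, Real.zero_rpow hp0]
      calc (0:ℝ) = |f (a k) - f (a k)| ^ p := this.symm
        _ ≤ d k := le_csSup (hbddk k hk) ⟨a k, ⟨le_rfl, (hamono k).le⟩, rfl⟩
    have hIk : ∀ k, k < N →
        ‖∫ t in (a k)..(a (k + 1)), F t‖ ≤ d k ^ (1 / p) * (1 / x) := by
      intro k hk
      have hub : ∀ t ∈ Icc (a k) (a (k + 1)), |f t - f (a k)| ≤ d k ^ (1 / p) := by
        intro t ht
        have h1 : |f t - f (a k)| ^ p ≤ d k := le_csSup (hbddk k hk) ⟨t, ht, rfl⟩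
        calc |f t - f (a k)| = (|f t - f (a k)| ^ p) ^ (1 / p) := by
              rw [one_div, Real.rpow_rpow_inv (abs_nonneg _) hp0]
          _ ≤ d k ^ (1 / p) := Real.rpow_le_rpow (by positivity) h1 (by positivity)
      have hxC : ((x:ℂ)) ≠ 0 := Complex.ofReal_ne_zero.mpr hx.ne'
      have hc0 : (-2 * (Real.pi : ℂ) * Complex.I * (x:ℂ)) ≠ 0 := by
        refine mul_ne_zero (mul_ne_zero (mul_ne_zero ?_ ?_) ?_) ?_
        · norm_num
        · exact Complex.ofReal_ne_zero.mpr Real.pi_ne_zero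
        · exact Complex.I_ne_zero
        · exact hxC
      have hexp1 : ∀ j : ℕ,
          Complex.exp (-2 * (Real.pi:ℂ) * Complex.I * (x:ℂ) * ((a j : ℝ) : ℂ)) = 1 := by
        intro j
        have harg : (-2 * (Real.pi:ℂ) * Complex.I * (x:ℂ) * ((a j : ℝ):ℂ))
            = (((-(j:ℤ) : ℤ) : ℂ)) * (2 * (Real.pi:ℂ) * Complex.I) := by
          simp only [hadef]
          push_cast
          field_simp
        rw [harg, Complex.exp_int_mul_two_pi_mul_I]
      have hzero : ∫ t in (a k)..(a (k + 1)), Complex.exp (-2 * (Real.pi : ℂ) * Complex.I * (x : ℂ) * (t : ℂ)) = 0 := by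
        rw [integral_exp_mul_complex hc0, hexp1 k, hexp1 (k+1), sub_self, zero_div]
      have hi1 : IntervalIntegrable F MeasureTheory.volume (a k) (a (k + 1)) :=
        hsub _ _ (hak_mem k (by omega)) (hak_mem (k + 1) (by omega))
      have hi2 : IntervalIntegrable
          (fun t : ℝ => (f (a k) : ℂ) * Complex.exp (-2 * (Real.pi : ℂ) * Complex.I * (x : ℂ) * (t : ℂ)))
          MeasureTheory.volume (a k) (a (k + 1)) := by
        apply Continuous.intervalIntegrable
        fun_prop
      have hdecomp : ∫ t in (a k)..(a (k + 1)), F t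
          = ∫ t in (a k)..(a (k + 1)),
              (((f t : ℂ) - (f (a k) : ℂ)) * Complex.exp (-2 * (Real.pi : ℂ) * Complex.I * (x : ℂ) * (t : ℂ))) := by
        have heq : (fun t : ℝ => ((f t : ℂ) - (f (a k) : ℂ)) * Complex.exp (-2 * (Real.pi : ℂ) * Complex.I * (x : ℂ) * (t : ℂ)))
            = fun t : ℝ => F t - (f (a k) : ℂ) * Complex.exp (-2 * (Real.pi : ℂ) * Complex.I * (x : ℂ) * (t : ℂ)) := by
          funext t; simp only [hFdef]; ring
        rw [heq, intervalIntegral.integral_sub hi1 hi2,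
          intervalIntegral.integral_const_mul, hzero, mul_zero, sub_zero]
      have hnormG : ∀ t : ℝ, ‖((f t : ℂ) - (f (a k):ℂ)) * Complex.exp (-2 * (Real.pi : ℂ) * Complex.I * (x : ℂ) * (t : ℂ))‖ = |f t - f (a k)| := by
        intro t
        have hrw : (-2 * (Real.pi : ℂ) * Complex.I * (x : ℂ) * (t : ℂ))
            = ((-2 * Real.pi * x * t : ℝ) : ℂ) * Complex.I := by push_cast; ring
        have hrw2 : ((f t : ℂ) - (f (a k) : ℂ)) = ((f t - f (a k) : ℝ) : ℂ) := by push_cast; ring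
        rw [hrw, hrw2, norm_mul, Complex.norm_exp_ofReal_mul_I, Complex.norm_real, Real.norm_eq_abs, mul_one]
      have hlen : |a (k+1) - a k| = 1 / x := by
        have : a (k+1) - a k = 1 / x := by
          simp only [hadef]; push_cast; field_simp; ring
        rw [this, abs_of_pos (by positivity)]
      rw [hdecomp]
      calc ‖∫ t in (a k)..(a (k + 1)), (((f t : ℂ) - (f (a k) : ℂ)) * Complex.exp (-2 * (Real.pi : ℂ) * Complex.I * (x : ℂ) * (t : ℂ)))‖
          ≤ d k ^ (1 / p) * |a (k+1) - a k| := by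
            apply intervalIntegral.norm_integral_le_of_norm_le_const
            intro t ht
            rw [Set.uIoc_of_le (hamono k).le] at ht
            rw [hnormG t]
            exact hub t ⟨ht.1.le, ht.2⟩
        _ = d k ^ (1 / p) * (1 / x) := by rw [hlen]
    have hIN : ‖∫ t in (a N)..1, F t‖ ≤ supNorm01 f * (1 / x) := by
      have h1 : ‖∫ t in (a N)..1, F t‖ ≤ supNorm01 f * |1 - a N| := by
        apply intervalIntegral.norm_integral_le_of_norm_le_const
        intro t ht
        rw [Set.uIoc_of_le haN] at ht
        rw [hnormF t]
        exact le_supNorm01 hbdd ⟨le_trans (hak_mem N le_rfl).1 ht.1.le, ht.2⟩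
      have h2 : |1 - a N| ≤ 1 / x := by
        rw [abs_of_nonneg (by linarith : (0:ℝ) ≤ 1 - a N)]
        simp only [hadef]
        rw [sub_le_iff_le_add, ← add_div, le_div_iff₀ hx, one_mul, add_comm]
        linarith
      exact le_trans h1 (mul_le_mul_of_nonneg_left h2 hM0)
    have hchoice : ∑ k ∈ Finset.range N, d k ≤ pVar p f ^ p := by
      simp only [hddef]
      refine sum_csSup_le (fun k _ => hne k) ?_
      intro g hg
      have hT : ∀ k, k < N → ∃ t, t ∈ Icc (a k) (a (k + 1)) ∧ g k = |f t - f (a k)| ^ p := by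
        intro k hk
        obtain ⟨t, ht, hts⟩ := hg k hk
        exact ⟨t, ht, hts.symm⟩
      choose! T hT1 hT2 using hT
      set z : ℕ → ℝ := fun j =>
        if j = 2 * N then 1 else if j % 2 = 0 then a (j / 2) else T (j / 2) with hzdef
      have hz0 : z 0 = 0 := by
        have h02 : 0 ≠ 2 * N := by omega
        simp only [hzdef, if_neg h02]
        norm_num [ha0]
      have hz1 : z (2 * N) = 1 := by simp [hzdef]
      have hzeven : ∀ k, k < N → z (2 * k) = a k := by
        intro k hk
        have h1 : 2 * k ≠ 2 * N := by omega
        have h2 : 2 * k % 2 = 0 := by omega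
        have h3 : 2 * k / 2 = k := by omega
        simp only [hzdef, if_neg h1, if_pos h2, h3]
      have hzodd : ∀ k, k < N → z (2 * k + 1) = T k := by
        intro k hk
        have h1 : 2 * k + 1 ≠ 2 * N := by omega
        have h2 : ¬ ((2 * k + 1) % 2 = 0) := by omega
        have h3 : (2 * k + 1) / 2 = k := by omega
        simp only [hzdef, if_neg h1, if_neg h2, h3]
      have hzmono : ∀ j, j < 2 * N → z j ≤ z (j + 1) := by
        intro j hj
        rcases Nat.even_or_odd j with ⟨i, hi⟩ | ⟨i, hi⟩
        · have hiN : i < N := by omega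
          have hji : j = 2 * i := by omega
          rw [hji, hzeven i hiN, (by omega : 2 * i + 1 = 2 * i + 1), hzodd i hiN]
          exact (hT1 i hiN).1
        · have hiN : i < N := by omega
          have hji : j = 2 * i + 1 := by omega
          rw [hji, hzodd i hiN]
          by_cases hend : 2 * i + 1 + 1 = 2 * N
          · rw [hend, hz1]
            have : T i ≤ a (i + 1) := (hT1 i hiN).2
            have : a (i + 1) ≤ 1 := (hak_mem (i + 1) (by omega)).2
            linarith [(hT1 i hiN).2]
          · have h2 : (2 * i + 1 + 1) % 2 = 0 := by omega
            have h3 : (2 * i + 1 + 1) / 2 = i + 1 := by omega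
            simp only [hzdef, if_neg hend, if_pos h2, h3]
            exact (hT1 i hiN).2
      have hkey := weak_chain_sum_le hp hfv (2 * N) z hz0 hz1 hzmono
      calc ∑ k ∈ Finset.range N, g k
          = ∑ k ∈ Finset.range N, ‖f (z (2 * k + 1)) - f (z (2 * k))‖ ^ p := by
            refine Finset.sum_congr rfl fun k hk => ?_
            have hkN := Finset.mem_range.1 hk
            rw [hzodd k hkN, hzeven k hkN, hT2 k hkN, Real.norm_eq_abs]
        _ ≤ ∑ j ∈ Finset.range (2 * N), ‖f (z (j + 1)) - f (z j)‖ ^ p := by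
            have himg : ∑ k ∈ Finset.range N, ‖f (z (2 * k + 1)) - f (z (2 * k))‖ ^ p
                = ∑ j ∈ (Finset.range N).image (fun k => 2 * k),
                    ‖f (z (j + 1)) - f (z j)‖ ^ p := by
              rw [Finset.sum_image (by intro u _ v _ h; simp only at h; omega)]
            rw [himg]
            refine Finset.sum_le_sum_of_subset_of_nonneg ?_ ?_
            · intro j hj
              simp only [Finset.mem_image, Finset.mem_range] at hj ⊢
              obtain ⟨k, hk, rfl⟩ := hj
              omega
            · intro j _ _
              positivity
        _ ≤ pVar p f ^ p := hkey
    have hHolder : ∑ k ∈ Finset.range N, d k ^ (1 / p) ≤ (N : ℝ) ^ (1 - 1 / p) * pVar p f := by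
      set D : ℕ → ℝ := fun k => if k < N then d k ^ (1 / p) else 0 with hDdef
      have hD0 : ∀ k, 0 ≤ D k := by
        intro k
        by_cases h : k < N
        · simp only [hDdef, if_pos h]; exact Real.rpow_nonneg (hd0 k h) _
        · simp [hDdef, h]
      have key := Real.inner_le_weight_mul_Lp_of_nonneg (Finset.range N) hp
        (fun _ => (1:ℝ)) D (fun _ => zero_le_one) hD0
      simp only [one_mul] at key
      have hsum1 : ∑ _k ∈ Finset.range N, (1:ℝ) = (N:ℝ) := by simp
      have hDp : ∑ k ∈ Finset.range N, D k ^ p = ∑ k ∈ Finset.range N, d k := by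
        refine Finset.sum_congr rfl fun k hk => ?_
        have hkN := Finset.mem_range.1 hk
        simp only [hDdef, if_pos hkN]
        rw [one_div, Real.rpow_inv_rpow (hd0 k hkN) hp0]
      have hDsum : ∑ k ∈ Finset.range N, D k = ∑ k ∈ Finset.range N, d k ^ (1 / p) := by
        refine Finset.sum_congr rfl fun k hk => ?_
        simp only [hDdef, if_pos (Finset.mem_range.1 hk)]
      rw [hsum1, hDp, hDsum] at key
      have hsd0 : 0 ≤ ∑ k ∈ Finset.range N, d k :=
        Finset.sum_nonneg fun k hk => hd0 k (Finset.mem_range.1 hk)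
      calc ∑ k ∈ Finset.range N, d k ^ (1 / p)
          ≤ (N:ℝ) ^ (1 - p⁻¹) * (∑ k ∈ Finset.range N, d k) ^ p⁻¹ := key
        _ ≤ (N:ℝ) ^ (1 - p⁻¹) * (pVar p f ^ p) ^ p⁻¹ := by
            have := Real.rpow_le_rpow hsd0 hchoice (by positivity : (0:ℝ) ≤ p⁻¹)
            have hN0 : (0:ℝ) ≤ (N:ℝ) ^ (1 - p⁻¹) := Real.rpow_nonneg (Nat.cast_nonneg N) _
            exact mul_le_mul_of_nonneg_left this hN0
        _ = (N : ℝ) ^ (1 - 1 / p) * pVar p f := by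
            rw [Real.rpow_rpow_inv hV0 hp0, one_div]
    have hfinal : (N : ℝ) ^ (1 - 1 / p) * pVar p f * (1 / x) ≤ pVar p f * x ^ (-(1 / p)) := by
      have hexp : (0:ℝ) ≤ 1 - 1 / p := by
        rw [sub_nonneg, div_le_one hppos]; exact hp
      have h1 : (N:ℝ) ^ (1 - 1/p) ≤ x ^ (1 - 1/p) :=
        Real.rpow_le_rpow (Nat.cast_nonneg N) hNx hexp
      calc (N : ℝ) ^ (1 - 1 / p) * pVar p f * (1 / x)
          ≤ x ^ (1 - 1 / p) * pVar p f * (1 / x) := by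
            have : (0:ℝ) ≤ 1 / x := by positivity
            exact mul_le_mul_of_nonneg_right (mul_le_mul_of_nonneg_right h1 hV0) this
        _ = pVar p f * (x ^ (1 - 1 / p) * x ^ (-1 : ℝ)) := by
            rw [Real.rpow_neg_one]; ring
        _ = pVar p f * x ^ (-(1 / p)) := by
            rw [← Real.rpow_add hx]
            congr 1
            ring
    calc ‖∫ t in (0:ℝ)..1, F t‖
        = ‖(∑ k ∈ Finset.range N, ∫ t in (a k)..(a (k + 1)), F t) + ∫ t in (a N)..1, F t‖ := by
          rw [hsplit]
      _ ≤ ‖∑ k ∈ Finset.range N, ∫ t in (a k)..(a (k + 1)), F t‖ + ‖∫ t in (a N)..1, F t‖ :=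
          norm_add_le _ _
      _ ≤ (∑ k ∈ Finset.range N, ‖∫ t in (a k)..(a (k + 1)), F t‖) + supNorm01 f * (1 / x) :=
          add_le_add (norm_sum_le _ _) hIN
      _ ≤ (∑ k ∈ Finset.range N, d k ^ (1 / p) * (1 / x)) + supNorm01 f * (1 / x) := by
          exact add_le_add
            (Finset.sum_le_sum fun k hk => hIk k (Finset.mem_range.1 hk)) le_rfl
      _ = (∑ k ∈ Finset.range N, d k ^ (1 / p)) * (1 / x) + supNorm01 f * (1 / x) := by
          rw [Finset.sum_mul]
      _ ≤ ((N : ℝ) ^ (1 - 1 / p) * pVar p f) * (1 / x) + supNorm01 f * (1 / x) := by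
          have hx0 : (0:ℝ) ≤ 1 / x := by positivity
          exact add_le_add (mul_le_mul_of_nonneg_right hHolder hx0) le_rfl
      _ ≤ pVar p f * x ^ (-(1 / p)) + supNorm01 f / x := by
          rw [mul_one_div, mul_one_div]
          rw [mul_one_div] at hfinal
          exact add_le_add hfinal le_rfl
end
end

section
/- Let G be an arithmetic semigroup with counting function N_G(x) = A x + O(x / log^γ x) for some γ > 1 and constant A. Then the associated zeta function ζ_G(s) = ∑_{g ∈ G} ‖g‖^{-s} satisfies |ζ_G(σ + it)| ≪ 1 + 1/|σ + it − 1| + |t| for all σ > 1. -/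
open Set MeasureTheory Filter

attribute [local instance] Classical.propDecidable

noncomputable section

/-- An arithmetic semigroup: a commutative semigroup with identity (i.e. a commutative
monoid) `G` together with a multiplicative norm `‖·‖ : G → [1,∞)` such that
`N_G(x) = #{g : ‖g‖ ≤ x}` is finite for every `x`, the identity is the unique element
of norm `1`, and factorization into irreducible elements is unique. -/
structure ArithSemigroup (G : Type) [CommMonoid G] where
  Norm : G → ℝ
  one_le_norm : ∀ g, 1 ≤ Norm g
  norm_mul : ∀ a b, Norm (a * b) = Norm a * Norm b
  finite : ∀ x : ℝ, {g : G | Norm g ≤ x}.Finite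
  eq_one_of_norm_eq_one : ∀ g, Norm g = 1 → g = 1
  unique_factorization : ∀ g : G, g ≠ 1 →
    ∃! m : Multiset G, (∀ p ∈ m, Irreducible p) ∧ m.prod = g

variable {G : Type} [CommMonoid G]

namespace ArithSemigroup

/-- The counting function `N_G(x) = #{g ∈ G : ‖g‖ ≤ x}`. -/
def N (A : ArithSemigroup G) (x : ℝ) : ℕ := {g : G | A.Norm g ≤ x}.ncard

/-- The zeta function `ζ_G(s) = ∑_{g ∈ G} ‖g‖^{-s}` (as a tsum, converging for `Re s > 1`). -/
def zeta (A : ArithSemigroup G) (s : ℂ) : ℂ := ∑' g : G, (A.Norm g : ℂ) ^ (-s)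

/-- Boundary values of the zeta function, via `ζ_G(s) = s ∫₁^∞ N_G(x) x^{-s-1} dx`. -/
def zetaB (A : ArithSemigroup G) (s : ℂ) : ℂ :=
  s * ∫ x in Ioi (1 : ℝ), (A.N x : ℂ) * (x : ℂ) ^ (-s - 1)

/-- The von Mangoldt function of `G`: `Λ(g) = log ‖p‖` if `g` is a (positive) power of
an irreducible `p`, and `0` otherwise. -/
def Lambda (A : ArithSemigroup G) (g : G) : ℝ :=
  if h : ∃ p : G, Irreducible p ∧ ∃ k : ℕ, 0 < k ∧ g = p ^ k
  then Real.log (A.Norm h.choose) else 0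

/-- The Chebyshev function `ψ_G(x) = ∑_{‖g‖ ≤ x} Λ_G(g)`. -/
def psi (A : ArithSemigroup G) (x : ℝ) : ℝ := ∑ g ∈ (A.finite x).toFinset, A.Lambda g

/-- `π_G(x)`: the number of irreducible elements of norm at most `x`. -/
def primeCount (A : ArithSemigroup G) (x : ℝ) : ℕ :=
  {g : G | Irreducible g ∧ A.Norm g ≤ x}.ncard

/-- The Möbius function of `G`: `μ(g) = (-1)^k` if `g` is a product of `k` distinct
irreducible elements, and `0` otherwise. -/
def mu (A : ArithSemigroup G) (g : G) : ℤ :=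
  if h : ∃ s : Finset G, (∀ p ∈ s, Irreducible p) ∧ s.prod id = g
  then (-1) ^ h.choose.card else 0

/-- The Mertens function `M_G(x) = ∑_{‖g‖ ≤ x} μ_G(g)`. -/
def M (A : ArithSemigroup G) (x : ℝ) : ℤ := ∑ g ∈ (A.finite x).toFinset, A.mu g

end ArithSemigroup

namespace ZetaBoundAux

open ArithSemigroup

variable {G : Type} [CommMonoid G]

lemma norm_pos (A : ArithSemigroup G) (g : G) : 0 < A.Norm g :=
  lt_of_lt_of_le one_pos (A.one_le_norm g)

lemma countable_aux (A : ArithSemigroup G) : Countable G := by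
  rw [← Set.countable_univ_iff]
  have hsub : (Set.univ : Set G) ⊆ ⋃ k : ℕ, {g : G | A.Norm g ≤ k} := by
    intro g _
    refine Set.mem_iUnion.2 ⟨⌈A.Norm g⌉₊, ?_⟩
    simp only [Set.mem_setOf_eq]
    exact Nat.le_ceil _
  exact ((Set.countable_iUnion fun k : ℕ => (A.finite (k : ℝ)).countable).mono hsub)

lemma finite_lt (A : ArithSemigroup G) (x : ℝ) : {g : G | A.Norm g < x}.Finite := by
  refine (A.finite x).subset fun g hg => ?_
  simp only [Set.mem_setOf_eq] at hg ⊢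
  exact le_of_lt hg

/-- The number of elements of norm strictly less than `x`. -/
noncomputable def Nlt (A : ArithSemigroup G) (x : ℝ) : ℕ := {g : G | A.Norm g < x}.ncard

lemma Nlt_le_N (A : ArithSemigroup G) (x : ℝ) : Nlt A x ≤ A.N x := by
  refine Set.ncard_le_ncard (fun g hg => ?_) (A.finite x)
  simp only [Set.mem_setOf_eq] at hg ⊢
  exact le_of_lt hg

lemma N_mono (A : ArithSemigroup G) : Monotone (fun x => (A.N x : ℝ)) := by
  intro x y hxy
  have h : A.N x ≤ A.N y := by
    refine Set.ncard_le_ncard (fun g hg => ?_) (A.finite y)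
    simp only [Set.mem_setOf_eq] at hg ⊢
    exact le_trans hg hxy
  show ((A.N x : ℕ) : ℝ) ≤ ((A.N y : ℕ) : ℝ)
  exact_mod_cast h

lemma tsum_indicator_eq (A : ArithSemigroup G) (x : ℝ) (c : ℂ) :
    ∑' g : G, (Set.Ioi (A.Norm g)).indicator (fun _ => c) x = (Nlt A x : ℂ) * c := by
  classical
  have hfin := finite_lt A x
  have h0 : ∀ g ∉ hfin.toFinset, (Set.Ioi (A.Norm g)).indicator (fun _ => c) x = 0 := by
    intro g hg
    rw [Set.Finite.mem_toFinset, Set.mem_setOf_eq, not_lt] at hg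
    have hxm : x ∉ Set.Ioi (A.Norm g) := by simp [Set.mem_Ioi, not_lt, hg]
    exact Set.indicator_of_notMem hxm _
  rw [tsum_eq_sum h0]
  have h1 : ∀ g ∈ hfin.toFinset, (Set.Ioi (A.Norm g)).indicator (fun _ => c) x = c := by
    intro g hg
    rw [Set.Finite.mem_toFinset, Set.mem_setOf_eq] at hg
    exact Set.indicator_of_mem (Set.mem_Ioi.mpr hg) _
  rw [Finset.sum_congr rfl h1, Finset.sum_const, nsmul_eq_mul,
    show (Nlt A x) = hfin.toFinset.card from Set.ncard_eq_toFinset_card _ hfin]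

lemma integral_indicator_cpow (A : ArithSemigroup G) {s : ℂ} (hs : 0 < s.re) (g : G) :
    ∫ x in Set.Ioi (1:ℝ), (Set.Ioi (A.Norm g)).indicator (fun x : ℝ => (x:ℂ) ^ (-s-1)) x
      = (A.Norm g : ℂ) ^ (-s) / s := by
  rw [MeasureTheory.integral_indicator measurableSet_Ioi,
      MeasureTheory.Measure.restrict_restrict measurableSet_Ioi,
      Set.Ioi_inter_Ioi, sup_eq_left.2 (A.one_le_norm g)]
  have h1 : (-s-1).re < -1 := by
    simp only [Complex.sub_re, Complex.neg_re, Complex.one_re]; linarith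
  rw [integral_Ioi_cpow_of_lt h1 (norm_pos A g), show -s - 1 + 1 = -s by ring,
    neg_div_neg_eq]

lemma integral_indicator_rpow (A : ArithSemigroup G) {b : ℝ} (hb : 0 < b) (g : G) :
    ∫ x in Set.Ioi (1:ℝ), (Set.Ioi (A.Norm g)).indicator (fun x : ℝ => x ^ (-b-1)) x
      = A.Norm g ^ (-b) / b := by
  rw [MeasureTheory.integral_indicator measurableSet_Ioi,
      MeasureTheory.Measure.restrict_restrict measurableSet_Ioi,
      Set.Ioi_inter_Ioi, sup_eq_left.2 (A.one_le_norm g)]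
  rw [integral_Ioi_rpow_of_lt (by linarith : -b-1 < -1) (norm_pos A g),
    show -b - 1 + 1 = -b by ring, neg_div_neg_eq]

lemma summable_rpow (A : ArithSemigroup G) {D : ℝ}
    (hD : ∀ x : ℝ, 1 < x → (Nlt A x : ℝ) ≤ D * x) {b : ℝ} (hb : 1 < b) :
    Summable (fun g : G => A.Norm g ^ (-b)) := by
  classical
  have hb0 : (0:ℝ) < b := by linarith
  refine summable_of_sum_le (c := b * ∫ x in Set.Ioi (1:ℝ), D * x ^ (-b))
    (fun g => Real.rpow_nonneg (norm_pos A g).le _) ?_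
  intro u
  have hint : ∀ g : G, MeasureTheory.IntegrableOn
      ((Set.Ioi (A.Norm g)).indicator (fun x : ℝ => x ^ (-b-1))) (Set.Ioi (1:ℝ)) := by
    intro g
    exact ((integrableOn_Ioi_rpow_of_lt (by linarith : -b-1 < -1)
      (norm_pos A g)).integrable_indicator measurableSet_Ioi).integrableOn
  have hDint : MeasureTheory.IntegrableOn (fun x : ℝ => D * x ^ (-b)) (Set.Ioi (1:ℝ)) :=
    (integrableOn_Ioi_rpow_of_lt (by linarith : -b < -1) one_pos).const_mul D
  have key : ∀ g : G, A.Norm g ^ (-b)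
      = b * ∫ x in Set.Ioi (1:ℝ), (Set.Ioi (A.Norm g)).indicator (fun x : ℝ => x ^ (-b-1)) x := by
    intro g
    rw [integral_indicator_rpow A hb0 g]
    field_simp
  calc ∑ g ∈ u, A.Norm g ^ (-b)
      = b * ∫ x in Set.Ioi (1:ℝ),
          ∑ g ∈ u, (Set.Ioi (A.Norm g)).indicator (fun x : ℝ => x ^ (-b-1)) x := by
        rw [MeasureTheory.integral_finset_sum u (fun g _ => hint g), Finset.mul_sum]
        exact Finset.sum_congr rfl fun g _ => key g
    _ ≤ b * ∫ x in Set.Ioi (1:ℝ), D * x ^ (-b) := by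
        refine mul_le_mul_of_nonneg_left ?_ hb0.le
        refine MeasureTheory.setIntegral_mono_on
          (MeasureTheory.integrable_finset_sum u (fun g _ => hint g)) hDint
          measurableSet_Ioi ?_
        intro x hx
        have hx1 : (1:ℝ) < x := hx
        have hxpos : (0:ℝ) < x := by linarith
        have hcnn : (0:ℝ) ≤ x ^ (-b-1) := Real.rpow_nonneg hxpos.le _
        have hsum : ∑ g ∈ u, (Set.Ioi (A.Norm g)).indicator (fun x : ℝ => x ^ (-b-1)) x
            = ((u.filter (fun g => A.Norm g < x)).card : ℝ) * x ^ (-b-1) := by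
          rw [← Finset.sum_filter_add_sum_filter_not u (fun g => A.Norm g < x)]
          have hA : ∑ g ∈ u.filter (fun g => A.Norm g < x),
              (Set.Ioi (A.Norm g)).indicator (fun x : ℝ => x ^ (-b-1)) x
              = ((u.filter (fun g => A.Norm g < x)).card : ℝ) * x ^ (-b-1) := by
            have h' : ∀ g ∈ u.filter (fun g => A.Norm g < x),
                (Set.Ioi (A.Norm g)).indicator (fun x : ℝ => x ^ (-b-1)) x = x ^ (-b-1) := by
              intro g hg
              exact Set.indicator_of_mem
                (Set.mem_Ioi.mpr (Finset.mem_filter.mp hg).2) _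
            rw [Finset.sum_congr rfl h', Finset.sum_const, nsmul_eq_mul]
          have hB : ∑ g ∈ u.filter (fun g => ¬ A.Norm g < x),
              (Set.Ioi (A.Norm g)).indicator (fun x : ℝ => x ^ (-b-1)) x = 0 := by
            refine Finset.sum_eq_zero fun g hg => ?_
            have hxm : x ∉ Set.Ioi (A.Norm g) := by
              simp only [Set.mem_Ioi, not_lt]
              exact not_lt.mp (Finset.mem_filter.mp hg).2
            exact Set.indicator_of_notMem hxm _
          rw [hA, hB, add_zero]
        rw [hsum]
        have hcard : ((u.filter (fun g => A.Norm g < x)).card : ℝ) ≤ (Nlt A x : ℝ) := by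
          have hsub : ((u.filter (fun g => A.Norm g < x)) : Set G)
              ⊆ {g : G | A.Norm g < x} := by
            intro g hg
            rw [Finset.mem_coe, Finset.mem_filter] at hg
            simp only [Set.mem_setOf_eq]
            exact hg.2
          have h := Set.ncard_le_ncard hsub (finite_lt A x)
          rw [Set.ncard_coe_finset] at h
          exact_mod_cast h
        have hxx : x * x ^ (-b-1) = x ^ (-b) := by
          have h := Real.rpow_add hxpos 1 (-b-1)
          rw [Real.rpow_one, show (1:ℝ) + (-b-1) = -b by ring] at h
          exact h.symm
        calc ((u.filter (fun g => A.Norm g < x)).card : ℝ) * x ^ (-b-1)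
            ≤ (Nlt A x : ℝ) * x ^ (-b-1) := mul_le_mul_of_nonneg_right hcard hcnn
          _ ≤ (D * x) * x ^ (-b-1) := mul_le_mul_of_nonneg_right (hD x hx1) hcnn
          _ = D * x ^ (-b) := by rw [mul_assoc, hxx]

lemma zeta_eq_integral (A : ArithSemigroup G) {D : ℝ}
    (hD : ∀ x : ℝ, 1 < x → (Nlt A x : ℝ) ≤ D * x) {s : ℂ} (hs : 1 < s.re) :
    A.zeta s = s * ∫ x in Set.Ioi (1:ℝ), (Nlt A x : ℂ) * (x:ℂ) ^ (-s-1) := by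
  have : Countable G := countable_aux A
  have hs0 : (0:ℝ) < s.re := by linarith
  have hsne : s ≠ 0 := by
    intro h
    rw [h] at hs0
    simp at hs0
  have hexp : (-s-1).re < -1 := by
    simp only [Complex.sub_re, Complex.neg_re, Complex.one_re]; linarith
  set F : G → ℝ → ℂ := fun g => (Set.Ioi (A.Norm g)).indicator (fun x : ℝ => (x:ℂ) ^ (-s-1))
    with hF
  have hFint : ∀ g : G, MeasureTheory.IntegrableOn (F g) (Set.Ioi (1:ℝ)) := fun g =>
    ((integrableOn_Ioi_cpow_of_lt hexp (norm_pos A g)).integrable_indicator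
      measurableSet_Ioi).integrableOn
  have hnorm : ∀ g : G, (∫⁻ x in Set.Ioi (1:ℝ), ‖F g x‖ₑ)
      = ENNReal.ofReal (A.Norm g ^ (-s.re) / s.re) := by
    intro g
    have h1 : ∫ x in Set.Ioi (1:ℝ), ‖F g x‖ = A.Norm g ^ (-s.re) / s.re := by
      have h2 : (fun x : ℝ => ‖F g x‖)
          = (Set.Ioi (A.Norm g)).indicator (fun x : ℝ => ‖(x:ℂ) ^ (-s-1)‖) := by
        funext x
        rw [hF]
        exact norm_indicator_eq_indicator_norm _ x
      have h3 : Set.EqOn (fun x : ℝ => ‖(x:ℂ) ^ (-s-1)‖) (fun x : ℝ => x ^ (-s.re - 1))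
          (Set.Ioi (A.Norm g)) := by
        intro x hx
        have hxpos : (0:ℝ) < x := lt_trans (norm_pos A g) hx
        simp only
        rw [Complex.norm_cpow_eq_rpow_re_of_pos hxpos,
          show (-s-1).re = -s.re - 1 by simp [Complex.sub_re, Complex.neg_re]]
      rw [h2, MeasureTheory.integral_indicator measurableSet_Ioi,
        MeasureTheory.Measure.restrict_restrict measurableSet_Ioi,
        Set.Ioi_inter_Ioi, sup_eq_left.2 (A.one_le_norm g),
        MeasureTheory.setIntegral_congr_fun measurableSet_Ioi h3,
        integral_Ioi_rpow_of_lt (by linarith : -s.re-1 < -1) (norm_pos A g),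
        show -s.re - 1 + 1 = -s.re by ring, neg_div_neg_eq]
    rw [← h1]
    exact (MeasureTheory.ofReal_integral_norm_eq_lintegral_enorm (hFint g)).symm
  have hsumm : Summable (fun g : G => A.Norm g ^ (-s.re) / s.re) :=
    (summable_rpow A hD hs).div_const _
  have hne : (∑' g : G, ∫⁻ x in Set.Ioi (1:ℝ), ‖F g x‖ₑ) ≠ ⊤ := by
    rw [tsum_congr hnorm, ← ENNReal.ofReal_tsum_of_nonneg
      (fun g => div_nonneg (Real.rpow_nonneg (norm_pos A g).le _) hs0.le) hsumm]
    exact ENNReal.ofReal_ne_top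
  have hfub := MeasureTheory.integral_tsum (fun g => (hFint g).aestronglyMeasurable) hne
  have hzeta : A.zeta s = s * ∑' g : G, ∫ x in Set.Ioi (1:ℝ), F g x := by
    simp only [ArithSemigroup.zeta]
    rw [← tsum_mul_left]
    refine tsum_congr fun g => ?_
    rw [hF]
    simp only
    rw [integral_indicator_cpow A hs0 g, mul_comm, div_mul_cancel₀ _ hsne]
  rw [hzeta, ← hfub]
  congr 1
  refine MeasureTheory.integral_congr_ae (Filter.Eventually.of_forall fun x => ?_)
  exact tsum_indicator_eq A x _

lemma Nlt_ae_eq (A : ArithSemigroup G) :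
    ∀ᵐ x : ℝ ∂(MeasureTheory.volume.restrict (Set.Ioi (1:ℝ))),
      (Nlt A x : ℂ) = (A.N x : ℂ) := by
  have : Countable G := countable_aux A
  have hc : (Set.range A.Norm).Countable := Set.countable_range _
  have h0 : MeasureTheory.volume (Set.range A.Norm) = 0 := hc.measure_zero _
  have h0' : (MeasureTheory.volume.restrict (Set.Ioi (1:ℝ))) (Set.range A.Norm) = 0 :=
    le_antisymm ((MeasureTheory.Measure.restrict_apply_le _ _).trans h0.le) zero_le
  rw [MeasureTheory.ae_iff]
  refine MeasureTheory.measure_mono_null (fun x hx => ?_) h0'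
  simp only [Set.mem_setOf_eq] at hx
  by_contra hxr
  apply hx
  have hset : {g : G | A.Norm g < x} = {g : G | A.Norm g ≤ x} := by
    ext g
    simp only [Set.mem_setOf_eq]
    constructor
    · exact le_of_lt
    · intro h
      rcases lt_or_eq_of_le h with h1 | h1
      · exact h1
      · exact absurd ⟨g, h1⟩ hxr
  have : Nlt A x = A.N x := by
    simp only [Nlt, ArithSemigroup.N, hset]
  rw [this]

lemma integrable_log_aux {γ : ℝ} (hγ : 1 < γ) :
    MeasureTheory.IntegrableOn (fun x : ℝ => Real.log x ^ (-γ) / x) (Set.Ioi (2:ℝ)) := by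
  have hγ1 : (1:ℝ) - γ ≠ 0 := by intro h; apply absurd hγ; rw [show γ = 1 by linarith]; simp
  have hderiv : ∀ x ∈ Set.Ioi (2:ℝ),
      HasDerivAt (fun y : ℝ => Real.log y ^ (1-γ) / (1-γ)) (Real.log x ^ (-γ) / x) x := by
    intro x hx
    have hx2 : (2:ℝ) < x := hx
    have hx0 : (0:ℝ) < x := by linarith
    have hlx : (0:ℝ) < Real.log x := Real.log_pos (by linarith)
    have h1 : HasDerivAt Real.log x⁻¹ x := Real.hasDerivAt_log (ne_of_gt hx0)
    have h2 : HasDerivAt (fun y : ℝ => y ^ (1-γ))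
        ((1-γ) * Real.log x ^ (1-γ-1)) (Real.log x) :=
      Real.hasDerivAt_rpow_const (Or.inl (ne_of_gt hlx))
    have h3 := (h2.comp x h1).div_const (1-γ)
    refine h3.congr_deriv ?_
    rw [show (1:ℝ)-γ-1 = -γ by ring]
    field_simp
  have hcont : ContinuousWithinAt (fun y : ℝ => Real.log y ^ (1-γ) / (1-γ)) (Set.Ici 2) 2 := by
    apply ContinuousAt.continuousWithinAt
    have hl2 : Real.log 2 ≠ 0 := ne_of_gt (Real.log_pos one_lt_two)
    exact ((Real.continuousAt_rpow_const _ _ (Or.inl hl2)).comp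
      (Real.continuousAt_log (by norm_num))).div_const _
  have htend : Filter.Tendsto (fun y : ℝ => Real.log y ^ (1-γ) / (1-γ))
      Filter.atTop (nhds (0 / (1-γ))) := by
    apply Filter.Tendsto.div_const
    have h1 : Filter.Tendsto (fun z : ℝ => z ^ (1-γ)) Filter.atTop (nhds 0) := by
      have h := tendsto_rpow_neg_atTop (by linarith : (0:ℝ) < γ - 1)
      simpa [show -(γ-1) = 1-γ by ring] using h
    exact h1.comp Real.tendsto_log_atTop
  exact MeasureTheory.integrableOn_Ioi_deriv_of_nonneg hcont hderiv
    (fun x hx => div_nonneg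
      (Real.rpow_nonneg (Real.log_nonneg (by rw [Set.mem_Ioi] at hx; linarith)) _)
      (by rw [Set.mem_Ioi] at hx; linarith)) htend

end ZetaBoundAux

open ZetaBoundAux

set_option maxHeartbeats 1000000 in
/-- If `N_G(x) = Ax + O(x/log^γ x)` with `γ > 1`, then
`|ζ_G(σ+it)| ≪ 1 + 1/|σ+it-1| + |t|` for `σ > 1`. -/
theorem zeta_bound (A : ArithSemigroup G) (a γ : ℝ) (hγ : 1 < γ)
    (hN : ∃ C : ℝ, ∀ x : ℝ, 2 ≤ x → |(A.N x : ℝ) - a * x| ≤ C * (x / Real.log x ^ γ)) :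
    ∃ C > (0:ℝ), ∀ σ t : ℝ, 1 < σ →
      ‖A.zeta (σ + t * Complex.I)‖ ≤
        C * (1 + 1 / ‖(σ + t * Complex.I : ℂ) - 1‖ + |t|) := by
  classical
  obtain ⟨C, hC⟩ := hN
  have hγ0 : (0:ℝ) < γ := by linarith
  have hlog2 : (0:ℝ) < Real.log 2 := Real.log_pos one_lt_two
  have hlog2γ : (0:ℝ) < Real.log 2 ^ γ := Real.rpow_pos_of_pos hlog2 γ
  have hC0 : 0 ≤ C := by
    have h2 := hC 2 le_rfl
    have hp : (0:ℝ) < 2 / Real.log 2 ^ γ := by positivity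
    nlinarith [abs_nonneg ((A.N 2 : ℝ) - a * 2)]
  set D : ℝ := |a| + C / Real.log 2 ^ γ + (A.N 2 : ℝ) + 1 with hDdef
  have hD1 : (0:ℝ) ≤ C / Real.log 2 ^ γ := by positivity
  have hDbound : ∀ x : ℝ, 1 ≤ x → (A.N x : ℝ) ≤ D * x := by
    intro x hx
    have hx0 : (0:ℝ) < x := by linarith
    rcases le_or_gt 2 x with h2 | h2
    · have h := (abs_le.mp (hC x h2)).2
      have hlx : Real.log 2 ≤ Real.log x := Real.log_le_log two_pos h2
      have hlxγ : Real.log 2 ^ γ ≤ Real.log x ^ γ :=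
        Real.rpow_le_rpow hlog2.le hlx hγ0.le
      have hxlog : x / Real.log x ^ γ ≤ x / Real.log 2 ^ γ :=
        div_le_div_of_nonneg_left hx0.le hlog2γ hlxγ
      have hCx : C * (x / Real.log x ^ γ) ≤ C / Real.log 2 ^ γ * x := by
        calc C * (x / Real.log x ^ γ) ≤ C * (x / Real.log 2 ^ γ) :=
              mul_le_mul_of_nonneg_left hxlog hC0
          _ = C / Real.log 2 ^ γ * x := by ring
      have ha1 : a * x ≤ |a| * x := mul_le_mul_of_nonneg_right (le_abs_self a) hx0.le
      have hDx : D * x = |a| * x + C / Real.log 2 ^ γ * x + ((A.N 2 : ℝ) + 1) * x := by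
        rw [hDdef]; ring
      have hN2x : (0:ℝ) ≤ ((A.N 2 : ℝ) + 1) * x :=
        mul_nonneg (by positivity) hx0.le
      calc (A.N x : ℝ) ≤ a * x + C * (x / Real.log x ^ γ) := by linarith
        _ ≤ |a| * x + C / Real.log 2 ^ γ * x := add_le_add ha1 hCx
        _ ≤ D * x := by linarith
    · have hmono : (A.N x : ℝ) ≤ (A.N 2 : ℝ) := N_mono A h2.le
      have hN2D : (A.N 2 : ℝ) ≤ D := by
        rw [hDdef]
        have : (0:ℝ) ≤ |a| := abs_nonneg a
        linarith
      calc (A.N x : ℝ) ≤ (A.N 2 : ℝ) := hmono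
        _ = (A.N 2 : ℝ) * 1 := by ring
        _ ≤ (A.N 2 : ℝ) * x := by
            refine mul_le_mul_of_nonneg_left hx ?_
            positivity
        _ ≤ D * x := mul_le_mul_of_nonneg_right hN2D hx0.le
  have hDlt : ∀ x : ℝ, 1 < x → (Nlt A x : ℝ) ≤ D * x := fun x hx =>
    le_trans (by exact_mod_cast Nlt_le_N A x) (hDbound x hx.le)
  have hK2int := integrable_log_aux hγ
  set K2 : ℝ := ∫ x in Set.Ioi (2:ℝ), Real.log x ^ (-γ) / x with hK2def
  have hK2nonneg : 0 ≤ K2 := by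
    refine MeasureTheory.setIntegral_nonneg measurableSet_Ioi fun x hx => ?_
    have hx2 : (2:ℝ) < x := hx
    exact div_nonneg (Real.rpow_nonneg (Real.log_nonneg (by linarith)) _) (by linarith)
  set B : ℝ := (A.N 2 : ℝ) + 2 * |a| with hBdef
  have hB0 : (0:ℝ) ≤ B := by positivity
  set K : ℝ := B + C * K2 with hKdef
  have hK0 : (0:ℝ) ≤ K := by positivity
  have hZsum : Summable (fun g : G => A.Norm g ^ (-(2:ℝ))) := summable_rpow A hDlt one_lt_two
  set Z : ℝ := ∑' g : G, A.Norm g ^ (-(2:ℝ)) with hZdef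
  have hZ0 : (0:ℝ) ≤ Z := tsum_nonneg fun g => Real.rpow_nonneg (norm_pos A g).le _
  refine ⟨|a| + 2*K + Z + 1, by positivity, ?_⟩
  intro σ t hσ
  set s : ℂ := (σ : ℂ) + (t : ℂ) * Complex.I with hsdef
  have hsre : s.re = σ := by simp [hsdef]
  have hsim : s.im = t := by simp [hsdef]
  have hs1 : 1 < s.re := by rw [hsre]; exact hσ
  have hnormval : ∀ g : G, ‖(A.Norm g : ℂ) ^ (-s)‖ = A.Norm g ^ (-σ) := by
    intro g
    rw [Complex.norm_cpow_eq_rpow_re_of_pos (norm_pos A g),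
      Complex.neg_re, hsre]
  have hr0 : (0:ℝ) ≤ 1 / ‖s - 1‖ := by positivity
  have ht0 : (0:ℝ) ≤ |t| := abs_nonneg t
  have hP1 : (1:ℝ) ≤ 1 + 1/‖s-1‖ + |t| := by linarith
  rcases lt_or_ge (2:ℝ) σ with hσ2 | hσ2
  · -- large σ : trivial bound by ζ(2)
    have hsummσ : Summable (fun g : G => ‖(A.Norm g : ℂ) ^ (-s)‖) :=
      (summable_rpow A hDlt hσ).congr fun g => (hnormval g).symm
    have hle : ‖A.zeta s‖ ≤ Z := by
      simp only [ArithSemigroup.zeta]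
      refine le_trans (norm_tsum_le_tsum_norm hsummσ) ?_
      rw [hZdef]
      refine Summable.tsum_le_tsum (fun g => ?_) hsummσ hZsum
      rw [hnormval g]
      exact Real.rpow_le_rpow_of_exponent_le (A.one_le_norm g) (by linarith)
    have hcoef : (0:ℝ) ≤ |a| + 2*K + Z + 1 := by positivity
    have hmm := mul_le_mul_of_nonneg_left hP1 hcoef
    have hZc : Z ≤ |a| + 2*K + Z + 1 := by
      have : (0:ℝ) ≤ |a| := abs_nonneg a
      linarith
    calc ‖A.zeta s‖ ≤ Z := hle
      _ ≤ (|a| + 2*K + Z + 1) * 1 := by linarith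
      _ ≤ (|a| + 2*K + Z + 1) * (1 + 1/‖s-1‖ + |t|) := hmm
  · -- main case 1 < σ ≤ 2
    have hid := zeta_eq_integral A hDlt hs1
    have hswitch : (∫ x in Set.Ioi (1:ℝ), (Nlt A x : ℂ) * (x:ℂ) ^ (-s-1))
        = ∫ x in Set.Ioi (1:ℝ), (A.N x : ℂ) * (x:ℂ) ^ (-s-1) := by
      refine MeasureTheory.integral_congr_ae ?_
      filter_upwards [Nlt_ae_eq A] with x hx
      rw [hx]
    have hsne1 : s - 1 ≠ 0 := by
      intro h
      have h' : (s-1).re = 0 := by rw [h]; simp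
      rw [Complex.sub_re, Complex.one_re] at h'
      linarith
    have hexp : (-s-1).re < -1 := by
      simp only [Complex.sub_re, Complex.neg_re, Complex.one_re, hsre]; linarith
    have hexps : (-s).re < -1 := by simp only [Complex.neg_re, hsre]; linarith
    have hNmeas : Measurable (fun x : ℝ => ((A.N x : ℝ))) := (N_mono A).measurable
    have hNc : Measurable (fun x : ℝ => ((A.N x : ℕ) : ℂ)) := by
      have heq : (fun x : ℝ => ((A.N x : ℕ) : ℂ))
          = (fun r : ℝ => (r : ℂ)) ∘ fun x => ((A.N x : ℝ)) := by
        funext x; simp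
      rw [heq]
      exact Complex.measurable_ofReal.comp hNmeas
    have hcpm : Measurable (fun x : ℝ => (x:ℂ) ^ (-s-1)) :=
      Complex.measurable_ofReal.pow measurable_const
    have hσint : MeasureTheory.IntegrableOn (fun x : ℝ => D * x ^ (-σ)) (Set.Ioi (1:ℝ)) :=
      (integrableOn_Ioi_rpow_of_lt (by linarith : -σ < -1) one_pos).const_mul D
    have hint1 : MeasureTheory.IntegrableOn
        (fun x : ℝ => (A.N x : ℂ) * (x:ℂ) ^ (-s-1)) (Set.Ioi (1:ℝ)) := by
      refine MeasureTheory.Integrable.mono' hσint ((hNc.mul hcpm).aestronglyMeasurable) ?_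
      filter_upwards [MeasureTheory.ae_restrict_mem measurableSet_Ioi] with x hx
      have hx1 : (1:ℝ) < x := hx
      have hxpos : (0:ℝ) < x := by linarith
      rw [norm_mul]
      have h1 : ‖((A.N x : ℕ) : ℂ)‖ = (A.N x : ℝ) := by
        rw [Complex.norm_natCast]
      have h2 : ‖(x:ℂ) ^ (-s-1)‖ = x ^ (-σ-1) := by
        rw [Complex.norm_cpow_eq_rpow_re_of_pos hxpos,
          show (-s-1).re = -σ - 1 by simp [Complex.sub_re, Complex.neg_re, hsre]]
      rw [h1, h2]
      have h3 : (A.N x : ℝ) ≤ D * x := hDbound x hx1.le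
      have h4 : x * x ^ (-σ-1) = x ^ (-σ) := by
        have h := Real.rpow_add hxpos 1 (-σ-1)
        rw [Real.rpow_one, show (1:ℝ) + (-σ-1) = -σ by ring] at h
        exact h.symm
      have h5 : (0:ℝ) ≤ x ^ (-σ-1) := Real.rpow_nonneg hxpos.le _
      calc (A.N x : ℝ) * x ^ (-σ-1) ≤ (D * x) * x ^ (-σ-1) :=
            mul_le_mul_of_nonneg_right h3 h5
        _ = D * x ^ (-σ) := by rw [mul_assoc, h4]
    have hint2 : MeasureTheory.IntegrableOn
        (fun x : ℝ => (a:ℂ) * (x:ℂ) ^ (-s)) (Set.Ioi (1:ℝ)) :=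
      (integrableOn_Ioi_cpow_of_lt hexps one_pos).const_mul _
    have hpoweq : ∀ x : ℝ, 1 < x →
        (a:ℂ) * (x:ℂ) ^ (-s) = ((a:ℂ) * (x:ℂ)) * (x:ℂ) ^ (-s-1) := by
      intro x hx
      have hxne : (x:ℂ) ≠ 0 := by
        simp only [ne_eq, Complex.ofReal_eq_zero]
        intro h; rw [h] at hx; linarith
      rw [show -s = 1 + (-s-1) by ring, Complex.cpow_add _ _ hxne, Complex.cpow_one]
      ring
    have hint3 : MeasureTheory.IntegrableOn
        (fun x : ℝ => ((A.N x : ℂ) - (a:ℂ) * (x:ℂ)) * (x:ℂ) ^ (-s-1)) (Set.Ioi (1:ℝ)) := by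
      refine MeasureTheory.IntegrableOn.congr_fun (hint1.sub hint2)
        (fun x hx => ?_) measurableSet_Ioi
      show (A.N x : ℂ) * (x:ℂ) ^ (-s-1) - (a:ℂ) * (x:ℂ) ^ (-s)
        = ((A.N x : ℂ) - (a:ℂ) * (x:ℂ)) * (x:ℂ) ^ (-s-1)
      rw [sub_mul, hpoweq x hx]
    have hIint : (∫ x in Set.Ioi (1:ℝ), (x:ℂ) ^ (-s)) = 1/(s-1) := by
      rw [integral_Ioi_cpow_of_lt hexps one_pos, Complex.ofReal_one, Complex.one_cpow,
        show (-s + 1 : ℂ) = -(s-1) by ring, neg_div_neg_eq]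
    have hsplit : (∫ x in Set.Ioi (1:ℝ), (A.N x : ℂ) * (x:ℂ) ^ (-s-1))
        = (∫ x in Set.Ioi (1:ℝ), ((A.N x : ℂ) - (a:ℂ) * (x:ℂ)) * (x:ℂ) ^ (-s-1))
          + (a:ℂ) * (1/(s-1)) := by
      have heq : Set.EqOn (fun x : ℝ => (A.N x : ℂ) * (x:ℂ) ^ (-s-1))
          (fun x : ℝ => ((A.N x : ℂ) - (a:ℂ)*(x:ℂ)) * (x:ℂ) ^ (-s-1)
            + (a:ℂ) * (x:ℂ) ^ (-s)) (Set.Ioi (1:ℝ)) := by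
        intro x hx
        simp only
        rw [hpoweq x hx]
        ring
      rw [MeasureTheory.setIntegral_congr_fun measurableSet_Ioi heq,
        MeasureTheory.integral_add hint3 hint2]
      congr 1
      rw [MeasureTheory.integral_const_mul, hIint]
    obtain ⟨E, hEdef⟩ : ∃ E : ℂ,
        E = ∫ x in Set.Ioi (1:ℝ), ((A.N x : ℂ) - (a:ℂ) * (x:ℂ)) * (x:ℂ) ^ (-s-1) :=
      ⟨_, rfl⟩
    have hEbound : ‖E‖ ≤ K := by
      rw [hEdef]
      refine le_trans (MeasureTheory.norm_integral_le_integral_norm _) ?_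
      have hnormint : MeasureTheory.IntegrableOn
          (fun x : ℝ => ‖((A.N x : ℂ) - (a:ℂ)*(x:ℂ)) * (x:ℂ) ^ (-s-1)‖) (Set.Ioi (1:ℝ)) :=
        hint3.norm
      have hunion : Set.Ioc (1:ℝ) 2 ∪ Set.Ioi (2:ℝ) = Set.Ioi (1:ℝ) :=
        Set.Ioc_union_Ioi_eq_Ioi one_le_two
      have hnf : ∀ x : ℝ, 0 < x → ‖((A.N x : ℂ) - (a:ℂ)*(x:ℂ)) * (x:ℂ) ^ (-s-1)‖
          = |(A.N x : ℝ) - a * x| * x ^ (-σ-1) := by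
        intro x hx
        rw [norm_mul]
        congr 1
        · rw [show ((A.N x : ℂ) - (a:ℂ)*(x:ℂ)) = (((A.N x : ℝ) - a * x : ℝ) : ℂ) by
            push_cast; ring, Complex.norm_real, Real.norm_eq_abs]
        · rw [Complex.norm_cpow_eq_rpow_re_of_pos hx,
            show (-s-1).re = -σ - 1 by simp [Complex.sub_re, Complex.neg_re, hsre]]
      rw [← hunion, MeasureTheory.setIntegral_union (Set.Ioc_disjoint_Ioi le_rfl)
        measurableSet_Ioi (hnormint.mono_set Set.Ioc_subset_Ioi_self)
        (hnormint.mono_set (Set.Ioi_subset_Ioi one_le_two))]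
      have hpart1 : (∫ x in Set.Ioc (1:ℝ) 2,
          ‖((A.N x : ℂ) - (a:ℂ)*(x:ℂ)) * (x:ℂ) ^ (-s-1)‖) ≤ B := by
        have hbnd : ∀ x ∈ Set.Ioc (1:ℝ) 2,
            ‖((A.N x : ℂ) - (a:ℂ)*(x:ℂ)) * (x:ℂ) ^ (-s-1)‖ ≤ B := by
          intro x hx
          obtain ⟨hx1, hx2⟩ := hx
          have hxpos : (0:ℝ) < x := by linarith
          rw [hnf x hxpos]
          have h1 : |(A.N x : ℝ) - a * x| ≤ (A.N 2 : ℝ) + 2 * |a| := by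
            refine le_trans (abs_sub _ _) ?_
            rw [abs_of_nonneg (Nat.cast_nonneg _ : (0:ℝ) ≤ (A.N x : ℝ)), abs_mul]
            have hax : |a| * |x| ≤ |a| * 2 := by
              refine mul_le_mul_of_nonneg_left ?_ (abs_nonneg a)
              rw [abs_of_pos hxpos]; exact hx2
            have hNx2 : (A.N x : ℝ) ≤ (A.N 2 : ℝ) := N_mono A hx2
            linarith
          have h2 : x ^ (-σ-1) ≤ 1 :=
            Real.rpow_le_one_of_one_le_of_nonpos hx1.le (by linarith)
          calc |(A.N x:ℝ) - a*x| * x ^ (-σ-1) ≤ ((A.N 2:ℝ) + 2*|a|) * 1 :=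
                mul_le_mul h1 h2 (Real.rpow_nonneg hxpos.le _) (by positivity)
            _ = B := by rw [hBdef]; ring
        calc (∫ x in Set.Ioc (1:ℝ) 2, ‖((A.N x : ℂ) - (a:ℂ)*(x:ℂ)) * (x:ℂ) ^ (-s-1)‖)
            ≤ ∫ _x in Set.Ioc (1:ℝ) 2, B := by
              refine MeasureTheory.setIntegral_mono_on
                (hnormint.mono_set Set.Ioc_subset_Ioi_self)
                (MeasureTheory.integrableOn_const measure_Ioc_lt_top.ne)
                measurableSet_Ioc hbnd
          _ = B := by
              rw [MeasureTheory.setIntegral_const, Real.volume_real_Ioc_of_le one_le_two, smul_eq_mul]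
              norm_num
      have hpart2 : (∫ x in Set.Ioi (2:ℝ),
          ‖((A.N x : ℂ) - (a:ℂ)*(x:ℂ)) * (x:ℂ) ^ (-s-1)‖) ≤ C * K2 := by
        have hbnd : ∀ x ∈ Set.Ioi (2:ℝ),
            ‖((A.N x : ℂ) - (a:ℂ)*(x:ℂ)) * (x:ℂ) ^ (-s-1)‖
              ≤ C * (Real.log x ^ (-γ) / x) := by
          intro x hx
          have hx2 : (2:ℝ) < x := hx
          have hx1 : (1:ℝ) < x := by linarith
          have hxpos : (0:ℝ) < x := by linarith
          have hlx : (0:ℝ) < Real.log x := Real.log_pos hx1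
          rw [hnf x hxpos]
          have h1 : |(A.N x : ℝ) - a * x| ≤ C * (x / Real.log x ^ γ) := hC x hx2.le
          have h2 : (0:ℝ) ≤ x ^ (-σ-1) := Real.rpow_nonneg hxpos.le _
          have hmain : C * (x / Real.log x ^ γ) * x ^ (-σ-1)
              ≤ C * (Real.log x ^ (-γ) / x) := by
            have hxa : x * x ^ (-σ-1) = x ^ (-σ) := by
              have h := Real.rpow_add hxpos 1 (-σ-1)
              rw [Real.rpow_one, show (1:ℝ) + (-σ-1) = -σ by ring] at h
              exact h.symm
            have hxb : x ^ (-σ) ≤ x ^ (-(1:ℝ)) :=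
              Real.rpow_le_rpow_of_exponent_le hx1.le (by linarith)
            have hxc : x ^ (-(1:ℝ)) = x⁻¹ := Real.rpow_neg_one x
            have hre : Real.log x ^ (-γ) = (Real.log x ^ γ)⁻¹ := by
              rw [Real.rpow_neg hlx.le]
            have hlγpos : (0:ℝ) < Real.log x ^ γ := Real.rpow_pos_of_pos hlx _
            calc C * (x / Real.log x ^ γ) * x ^ (-σ-1)
                = C * (Real.log x ^ γ)⁻¹ * (x * x ^ (-σ-1)) := by ring
              _ = C * (Real.log x ^ γ)⁻¹ * x ^ (-σ) := by rw [hxa]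
              _ ≤ C * (Real.log x ^ γ)⁻¹ * x⁻¹ := by
                  rw [← hxc]
                  exact mul_le_mul_of_nonneg_left hxb (by positivity)
              _ = C * (Real.log x ^ (-γ) / x) := by rw [hre]; ring
          calc |(A.N x:ℝ) - a*x| * x ^ (-σ-1) ≤ C * (x / Real.log x ^ γ) * x ^ (-σ-1) :=
                mul_le_mul_of_nonneg_right h1 h2
            _ ≤ C * (Real.log x ^ (-γ) / x) := hmain
        calc (∫ x in Set.Ioi (2:ℝ), ‖((A.N x : ℂ) - (a:ℂ)*(x:ℂ)) * (x:ℂ) ^ (-s-1)‖)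
            ≤ ∫ x in Set.Ioi (2:ℝ), C * (Real.log x ^ (-γ) / x) :=
              MeasureTheory.setIntegral_mono_on
                (hnormint.mono_set (Set.Ioi_subset_Ioi one_le_two))
                (hK2int.const_mul C) measurableSet_Ioi hbnd
          _ = C * K2 := by rw [MeasureTheory.integral_const_mul, hK2def]
      have hKeq : K = B + C * K2 := hKdef
      linarith
    have hformula : A.zeta s = s * E + (a:ℂ) * (s * (1/(s-1))) := by
      rw [hid, hswitch, hsplit, hEdef]; ring
    have hsn : ‖s‖ ≤ 2 + |t| := by
      refine le_trans (Complex.norm_le_abs_re_add_abs_im s) ?_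
      rw [hsre, hsim, abs_of_pos (by linarith : (0:ℝ) < σ)]
      linarith
    have hfrac : ‖s * (1/(s-1))‖ ≤ 1 + 1/‖s-1‖ := by
      have h1 : s * (1/(s-1)) = 1 + 1/(s-1) := by
        field_simp
        ring
      rw [h1]
      refine le_trans (norm_add_le _ _) ?_
      rw [norm_one, norm_div, norm_one]
    have e1 : ‖s‖ * ‖E‖ ≤ (2 + |t|) * K :=
      mul_le_mul hsn hEbound (norm_nonneg _) (by positivity)
    have e2 : |a| * ‖s * (1/(s-1))‖ ≤ |a| * (1 + 1/‖s-1‖) :=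
      mul_le_mul_of_nonneg_left hfrac (abs_nonneg a)
    calc ‖A.zeta s‖
        ≤ ‖s‖ * ‖E‖ + |a| * ‖s * (1/(s-1))‖ := by
          rw [hformula]
          refine le_trans (norm_add_le _ _) ?_
          rw [norm_mul, norm_mul, Complex.norm_real, Real.norm_eq_abs]
      _ ≤ (2 + |t|) * K + |a| * (1 + 1/‖s-1‖) := add_le_add e1 e2
      _ ≤ (|a| + 2*K + Z + 1) * (1 + 1/‖s-1‖ + |t|) := by
          nlinarith [hK0, hZ0, hr0, ht0, abs_nonneg a, mul_nonneg hK0 ht0,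
            mul_nonneg hZ0 hr0, mul_nonneg hZ0 ht0, mul_nonneg hK0 hr0,
            mul_nonneg (abs_nonneg a) ht0, mul_nonneg (abs_nonneg a) hr0]
end
end
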